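/- n-qubit quantum one-time pad: for every 2^n × 2^n complex matrix ρ (indexed by functions Fin n → Fin 2), (1/4^n)·Σ_{a,b : Fin n → {0,1}} P(a,b) ρ P(a,b)† = (trace ρ / 2^n) · I, where P(a,b) is the n-fold tensor (Kronecker) product whose i-th factor is X^{a(i)} Z^{b(i)}. -/

import Mathlib

open Matrix

noncomputable def X : Matrix (Fin 2) (Fin 2) ℂ := !![0, 1; 1, 0]
noncomputable def Z : Matrix (Fin 2) (Fin 2) ℂ := !![1, 0; 0, -1]

/-- The `n`-qubit Pauli operator `P(a,b) = ⊗_{i<n} X^{a i} Z^{b i}`, given as the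
`2^n × 2^n` matrix (indexed by `Fin n → Fin 2`) whose entries are the products of the
entries of the single-qubit factors. -/
noncomputable def PauliXZ (n : ℕ) (a b : Fin n → Fin 2) :
    Matrix (Fin n → Fin 2) (Fin n → Fin 2) ℂ :=
  fun x y => ∏ i : Fin n, (X ^ (a i : ℕ) * Z ^ (b i : ℕ)) (x i) (y i)

lemma pauli_entry (a b s t : Fin 2) :
    (X ^ (a:ℕ) * Z ^ (b:ℕ)) s t = if t = s + a then ((-1:ℂ))^((b:ℕ)*(t:ℕ)) else 0 := by
  fin_cases a <;> fin_cases b <;> fin_cases s <;> fin_cases t <;>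
    simp [X, Z, pow_succ, Matrix.mul_apply, Fin.sum_univ_two]

lemma PauliXZ_eq (n : ℕ) (a b x y : Fin n → Fin 2) :
    PauliXZ n a b x y =
      if y = (fun i => x i + a i) then ∏ i, ((-1:ℂ))^((b i : ℕ)*((y i):ℕ)) else 0 := by
  unfold PauliXZ
  simp only [pauli_entry]
  by_cases h : y = fun i => x i + a i
  · simp only [h, if_pos rfl]
    exact Finset.prod_congr rfl fun i _ => by simp
  · rw [if_neg h]
    obtain ⟨i, hi⟩ : ∃ i, y i ≠ x i + a i := by
      by_contra hc; push_neg at hc; exact h (funext hc)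
    exact Finset.prod_eq_zero (Finset.mem_univ i) (if_neg hi)

lemma fin2_cancel : ∀ p q : Fin 2, p + (p + q) = q := by decide

lemma inner_sum2 (p q : Fin 2) :
    (∑ t : Fin 2, ((-1:ℂ))^((t:ℕ)*(p:ℕ) + (t:ℕ)*(q:ℕ))) = if p = q then 2 else 0 := by
  fin_cases p <;> fin_cases q <;> simp [Fin.sum_univ_two]


/-- `n`-qubit quantum one-time pad: averaging `P(a,b) ρ P(a,b)†` over all
`a, b : Fin n → {0,1}` yields `(tr ρ / 2^n) • I`. -/
theorem n_qubit_one_time_pad (n : ℕ) (ρ : Matrix (Fin n → Fin 2) (Fin n → Fin 2) ℂ) :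
    ((1 : ℂ) / 4 ^ n) • ∑ a : Fin n → Fin 2, ∑ b : Fin n → Fin 2,
      PauliXZ n a b * ρ * (PauliXZ n a b)ᴴ
    = (ρ.trace / 2 ^ n) • (1 : Matrix (Fin n → Fin 2) (Fin n → Fin 2) ℂ) := by
  ext x y
  have key : ∀ a b : Fin n → Fin 2,
      (PauliXZ n a b * ρ * (PauliXZ n a b)ᴴ) x y
      = (∏ i, ((-1:ℂ))^((b i:ℕ)*(((x i + a i):Fin 2):ℕ) + (b i:ℕ)*(((y i + a i):Fin 2):ℕ)))
        * ρ (fun i => x i + a i) (fun i => y i + a i) := by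
    intro a b
    simp only [Matrix.mul_apply, conjTranspose_apply, PauliXZ_eq, apply_ite star,
      star_zero, star_prod, star_pow, star_neg, star_one, ite_mul, mul_ite,
      zero_mul, mul_zero, Finset.sum_ite_eq, Finset.sum_ite_eq',
      Finset.mem_univ, if_true]
    rw [mul_right_comm, ← Finset.prod_mul_distrib]
    congr 1
    exact Finset.prod_congr rfl fun i _ => by rw [← pow_add]
  simp only [Matrix.smul_apply, Matrix.sum_apply, key, Matrix.one_apply, smul_eq_mul]
  have hb : ∀ a : Fin n → Fin 2,
      (∑ b : Fin n → Fin 2,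
        (∏ i, ((-1:ℂ))^((b i:ℕ)*(((x i + a i):Fin 2):ℕ) + (b i:ℕ)*(((y i + a i):Fin 2):ℕ)))
          * ρ (fun i => x i + a i) (fun i => y i + a i))
      = (if x = y then (2:ℂ)^n else 0) * ρ (fun i => x i + a i) (fun i => y i + a i) := by
    intro a
    rw [← Finset.sum_mul]
    have hps := Fintype.prod_sum (fun (i : Fin n) (t : Fin 2) =>
      ((-1:ℂ))^((t:ℕ)*(((x i + a i):Fin 2):ℕ) + (t:ℕ)*(((y i + a i):Fin 2):ℕ)))
    rw [← hps]
    congr 1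
    calc ∏ i, ∑ t : Fin 2, ((-1:ℂ))^((t:ℕ)*(((x i + a i):Fin 2):ℕ) + (t:ℕ)*(((y i + a i):Fin 2):ℕ))
        = ∏ i, if x i = y i then (2:ℂ) else 0 := by
          refine Finset.prod_congr rfl fun i _ => ?_
          rw [inner_sum2]; simp only [add_left_inj]
      _ = if x = y then (2:ℂ)^n else 0 := by
          by_cases hxy : x = y
          · subst hxy
            simp [Finset.prod_const, Finset.card_univ]
          · rw [if_neg hxy]
            obtain ⟨i, hi⟩ : ∃ i, x i ≠ y i := by
              by_contra hc; push_neg at hc; exact hxy (funext hc)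
            exact Finset.prod_eq_zero (Finset.mem_univ i) (if_neg hi)
  simp only [hb]
  by_cases hxy : x = y
  · subst hxy
    rw [if_pos rfl]
    simp only [if_pos rfl]
    have hbij : Function.Bijective (fun a : Fin n → Fin 2 => fun i => x i + a i) := by
      apply Function.Involutive.bijective
      intro a
      funext i
      exact fin2_cancel (x i) (a i)
    have htr : ∑ a : Fin n → Fin 2, ρ (fun i => x i + a i) (fun i => x i + a i) = ρ.trace := by
      rw [Matrix.trace]
      exact Fintype.sum_bijective _ hbij _ _ (fun a => rfl)
    rw [← Finset.mul_sum, htr]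
    have h4 : (4:ℂ)^n = 2^n * 2^n := by
      rw [show (4:ℂ) = 2*2 by norm_num, mul_pow]
    have h2 : (2:ℂ)^n ≠ 0 := pow_ne_zero _ two_ne_zero
    field_simp [h4]
    rw [if_pos trivial, h4]
    ring
  · rw [if_neg hxy]
    simp [hxy]
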